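/- For ω ~ N(0, σ²I_d) and b ~ Uniform(0, 2π) independent, E[2 cos(ω·x + b) cos(ω·y + b)] = exp(-σ²‖x-y‖²/2) for all x, y ∈ ℝ^d. -/

import Mathlib

open MeasureTheory ProbabilityTheory Real Complex NNReal ENNReal

lemma pi_integral (d : ℕ) (μ : Measure ℝ) [SigmaFinite μ] (f : Fin d → ℝ → ℂ) :
    ∫ x : Fin d → ℝ, ∏ i, f i (x i) ∂Measure.pi (fun _ => μ) = ∏ i, ∫ x, f i x ∂μ := by
  letI : MeasureSpace ℝ := ⟨μ⟩
  have h := MeasureTheory.integral_fintype_prod_eq_prod f (μ := fun _ => μ)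
  exact h

lemma gauss_char (v : ℝ≥0) (t : ℝ) :
    ∫ ω : ℝ, Complex.exp (Complex.I * t * ω) ∂(gaussianReal 0 v) =
      Complex.exp (-(v : ℝ) * t ^ 2 / 2) := by
  rcases eq_or_ne v 0 with hv | hv
  · simp [hv, gaussianReal_zero_var]
  · rw [gaussianReal_of_var_ne_zero _ hv]
    have hmeas : Measurable fun x => (gaussianPDFReal 0 v x).toNNReal :=
      (measurable_gaussianPDFReal 0 v).real_toNNReal
    have hdens : (gaussianPDF 0 v) = fun x => ((gaussianPDFReal 0 v x).toNNReal : ℝ≥0∞) := by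
      funext x; rfl
    rw [hdens, integral_withDensity_eq_integral_smul hmeas]
    have hv' : (0 : ℝ) < (v : ℝ) := by positivity
    have h2v : (0 : ℝ) < 2 * π * v := by positivity
    have key : ∀ x : ℝ, ((gaussianPDFReal 0 v x).toNNReal : ℝ≥0) • Complex.exp (Complex.I * t * x)
        = ((Real.sqrt (2 * π * v))⁻¹ : ℂ) *
          Complex.exp ((-(1 / (2 * (v:ℝ))) : ℂ) * x ^ 2 + (t * Complex.I) * x + 0) := by
      intro x
      rw [NNReal.smul_def, Real.coe_toNNReal _ (gaussianPDFReal_nonneg 0 v x)]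
      rw [gaussianPDFReal_def, Complex.real_smul]
      push_cast
      rw [mul_assoc, ← Complex.exp_add]
      congr 1
      field_simp
      ring_nf
    simp_rw [key]
    rw [integral_const_mul, integral_cexp_quadratic (by simp [hv'] : ((-(1 / (2 * (v:ℝ))) : ℂ)).re < 0)]
    have : (↑π / -(-(1 / (2 * (v:ℝ))) : ℂ)) = ((2 * π * v : ℝ) : ℂ) := by
      push_cast; field_simp
    rw [this]
    rw [show ((2 * π * v : ℝ) : ℂ) ^ (1/2 : ℂ) = ((Real.sqrt (2 * π * v) : ℝ) : ℂ) by
      rw [show (1/2 : ℂ) = ((1/2 : ℝ) : ℂ) by norm_num, ← Complex.ofReal_cpow h2v.le,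
        ← Real.sqrt_eq_rpow]]
    rw [← mul_assoc, ← Complex.ofReal_inv, ← Complex.ofReal_mul,
      inv_mul_cancel₀ (by positivity : Real.sqrt (2 * π * v) ≠ 0)]
    rw [Complex.ofReal_one, one_mul]
    congr 1
    have hvne : ((v:ℝ) : ℂ) ≠ 0 := by exact_mod_cast hv'.ne'
    field_simp
    ring_nf
    simp [Complex.I_sq]

lemma gauss_cos (d : ℕ) (v : ℝ≥0) (z : Fin d → ℝ) :
    ∫ ω : Fin d → ℝ, Real.cos (∑ i, ω i * z i) ∂(Measure.pi fun _ => gaussianReal 0 v) =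
      Real.exp (-(v : ℝ) * (∑ i, z i ^ 2) / 2) := by
  have hcont : Continuous fun ω : Fin d → ℝ => (∑ i, ω i * z i) :=
    continuous_finset_sum _ fun i _ => (continuous_apply i).mul continuous_const
  have hint : Integrable (fun ω : Fin d → ℝ => Complex.exp (Complex.I * (∑ i, ω i * z i)))
      (Measure.pi fun _ => gaussianReal 0 v) := by
    apply (integrable_const (1 : ℝ)).mono'
    · exact (Complex.continuous_exp.comp (continuous_const.mul
        (Complex.continuous_ofReal.comp hcont))).aestronglyMeasurable
    · refine Filter.Eventually.of_forall fun ω => ?_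
      rw [show Complex.I * ((∑ i, ω i * z i : ℝ) : ℂ) = ((∑ i, ω i * z i : ℝ) : ℂ) * Complex.I by
        ring]
      rw [Complex.norm_exp_ofReal_mul_I]
  have hre : ∀ ω : Fin d → ℝ, Real.cos (∑ i, ω i * z i) =
      (Complex.exp (Complex.I * (∑ i, ω i * z i))).re := by
    intro ω
    rw [show Complex.I * ((∑ i, ω i * z i : ℝ) : ℂ) = ((∑ i, ω i * z i : ℝ) : ℂ) * Complex.I by
      ring, Complex.exp_ofReal_mul_I_re]
  simp_rw [hre]
  have hint' := integral_re (𝕜 := ℂ) hint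
  simp only [RCLike.re_to_complex] at hint'
  rw [hint']
  have hprod : ∀ ω : Fin d → ℝ, Complex.exp (Complex.I * (∑ i, ω i * z i)) =
      ∏ i, Complex.exp (Complex.I * (z i) * (ω i)) := by
    intro ω
    rw [← Complex.exp_sum]
    congr 1
    push_cast
    rw [Finset.mul_sum]
    congr 1; funext i; ring
  simp_rw [hprod]
  rw [pi_integral d (gaussianReal 0 v) (fun i w => Complex.exp (Complex.I * (z i) * (w:ℂ)))]
  have h1 : ∀ i, ∫ x : ℝ, Complex.exp (Complex.I * (z i) * x) ∂(gaussianReal 0 v) =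
      Complex.exp (-(v : ℝ) * (z i) ^ 2 / 2) := fun i => gauss_char v (z i)
  simp_rw [h1, ← Complex.exp_sum]
  have : (∑ i, (-(v : ℝ) * (z i) ^ 2 / 2 : ℂ)) = ((-(v : ℝ) * (∑ i, z i ^ 2) / 2 : ℝ) : ℂ) := by
    push_cast
    rw [Finset.mul_sum, Finset.sum_div]
  rw [this, ← Complex.ofReal_exp, Complex.ofReal_re]

lemma nu_prob : IsProbabilityMeasure
    ((ENNReal.ofReal (2 * π))⁻¹ • volume.restrict (Set.Ioc (0 : ℝ) (2 * π))) := by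
  constructor
  rw [Measure.smul_apply, Measure.restrict_apply MeasurableSet.univ, Set.univ_inter,
    Real.volume_Ioc, sub_zero, smul_eq_mul,
    ENNReal.inv_mul_cancel (by simp [Real.pi_pos] : ENNReal.ofReal (2 * π) ≠ 0)
      ENNReal.ofReal_ne_top]

lemma cos_shift_int (k : ℝ) :
    ∫ b, Real.cos (k + 2 * b)
      ∂((ENNReal.ofReal (2 * π))⁻¹ • volume.restrict (Set.Ioc (0 : ℝ) (2 * π))) = 0 := by
  rw [integral_smul_measure,
    ← intervalIntegral.integral_of_le (by positivity : (0 : ℝ) ≤ 2 * π)]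
  have h : ∀ b : ℝ, Real.cos (k + 2 * b) = Real.cos (2 * b + k) := fun b => by ring_nf
  simp_rw [h]
  rw [intervalIntegral.integral_comp_mul_add Real.cos two_ne_zero k, integral_cos]
  have h2 : Real.sin (2 * (2 * π) + k) = Real.sin (2 * 0 + k) := by
    rw [show 2 * (2 * π) + k = (2 * 0 + k + 2 * π) + 2 * π by ring, Real.sin_add_two_pi,
      Real.sin_add_two_pi]
  rw [h2, sub_self, smul_zero, smul_zero]

theorem random_fourier_feature_identity (d : ℕ) (σ : NNReal)
    (x y : Fin d → ℝ) :
    ∫ p : (Fin d → ℝ) × ℝ,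
        2 * Real.cos ((∑ i, p.1 i * x i) + p.2) * Real.cos ((∑ i, p.1 i * y i) + p.2)
      ∂((Measure.pi fun _ : Fin d => gaussianReal 0 (σ ^ 2)).prod
          ((ENNReal.ofReal (2 * Real.pi))⁻¹ •
            volume.restrict (Set.Ioc (0 : ℝ) (2 * Real.pi)))) =
    Real.exp (-(σ : ℝ) ^ 2 * (∑ i, (x i - y i) ^ 2) / 2) := by
  haveI := nu_prob
  have hc1 : Continuous fun p : (Fin d → ℝ) × ℝ => (∑ i, p.1 i * x i) + p.2 :=
    (continuous_finset_sum _ fun i _ =>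
      ((continuous_apply i).comp continuous_fst).mul continuous_const).add continuous_snd
  have hc2 : Continuous fun p : (Fin d → ℝ) × ℝ => (∑ i, p.1 i * y i) + p.2 :=
    (continuous_finset_sum _ fun i _ =>
      ((continuous_apply i).comp continuous_fst).mul continuous_const).add continuous_snd
  have hcont : Continuous fun p : (Fin d → ℝ) × ℝ =>
      2 * Real.cos ((∑ i, p.1 i * x i) + p.2) * Real.cos ((∑ i, p.1 i * y i) + p.2) :=
    ((continuous_const.mul (Real.continuous_cos.comp hc1)).mul (Real.continuous_cos.comp hc2))
  have hint : Integrable (fun p : (Fin d → ℝ) × ℝ =>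
      2 * Real.cos ((∑ i, p.1 i * x i) + p.2) * Real.cos ((∑ i, p.1 i * y i) + p.2))
      ((Measure.pi fun _ : Fin d => gaussianReal 0 (σ ^ 2)).prod
        ((ENNReal.ofReal (2 * Real.pi))⁻¹ •
          volume.restrict (Set.Ioc (0 : ℝ) (2 * Real.pi)))) := by
    apply (integrable_const (2 : ℝ)).mono' hcont.aestronglyMeasurable
    refine Filter.Eventually.of_forall fun p => ?_
    have h1 := Real.abs_cos_le_one ((∑ i, p.1 i * x i) + p.2)
    have h2 := Real.abs_cos_le_one ((∑ i, p.1 i * y i) + p.2)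
    rw [Real.norm_eq_abs, abs_mul, abs_mul, _root_.abs_two]
    nlinarith [abs_nonneg (Real.cos ((∑ i, p.1 i * x i) + p.2)),
      abs_nonneg (Real.cos ((∑ i, p.1 i * y i) + p.2))]
  rw [MeasureTheory.integral_prod _ hint]
  have inner : ∀ ω : Fin d → ℝ,
      (∫ b, 2 * Real.cos ((∑ i, ω i * x i) + b) * Real.cos ((∑ i, ω i * y i) + b)
        ∂((ENNReal.ofReal (2 * Real.pi))⁻¹ •
          volume.restrict (Set.Ioc (0 : ℝ) (2 * Real.pi)))) =
      Real.cos (∑ i, ω i * (x i - y i)) := by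
    intro ω
    have hpt : ∀ b : ℝ, 2 * Real.cos ((∑ i, ω i * x i) + b) * Real.cos ((∑ i, ω i * y i) + b) =
        Real.cos ((∑ i, ω i * x i) - (∑ i, ω i * y i)) +
          Real.cos (((∑ i, ω i * x i) + (∑ i, ω i * y i)) + 2 * b) := by
      intro b
      have e1 : Real.cos ((∑ i, ω i * x i) - (∑ i, ω i * y i)) =
          Real.cos ((∑ i, ω i * x i) + b) * Real.cos ((∑ i, ω i * y i) + b) +
            Real.sin ((∑ i, ω i * x i) + b) * Real.sin ((∑ i, ω i * y i) + b) := by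
        rw [show (∑ i, ω i * x i) - (∑ i, ω i * y i)
            = ((∑ i, ω i * x i) + b) - ((∑ i, ω i * y i) + b) by ring, Real.cos_sub]
      have e2 : Real.cos (((∑ i, ω i * x i) + (∑ i, ω i * y i)) + 2 * b) =
          Real.cos ((∑ i, ω i * x i) + b) * Real.cos ((∑ i, ω i * y i) + b) -
            Real.sin ((∑ i, ω i * x i) + b) * Real.sin ((∑ i, ω i * y i) + b) := by
        rw [show ((∑ i, ω i * x i) + (∑ i, ω i * y i)) + 2 * b
            = ((∑ i, ω i * x i) + b) + ((∑ i, ω i * y i) + b) by ring, Real.cos_add]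
      rw [e1, e2]
      ring
    simp_rw [hpt]
    have hI2 : Integrable (fun b : ℝ =>
        Real.cos (((∑ i, ω i * x i) + (∑ i, ω i * y i)) + 2 * b))
        ((ENNReal.ofReal (2 * Real.pi))⁻¹ •
          volume.restrict (Set.Ioc (0 : ℝ) (2 * Real.pi))) := by
      apply (integrable_const (1 : ℝ)).mono'
        (Real.continuous_cos.comp (continuous_const.add
          (continuous_const.mul continuous_id))).aestronglyMeasurable
      exact Filter.Eventually.of_forall fun b => by
        rw [Real.norm_eq_abs]; exact Real.abs_cos_le_one _
    rw [integral_add (integrable_const _) hI2, integral_const, cos_shift_int, add_zero,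
      probReal_univ]
    rw [show (∑ i, ω i * x i) - (∑ i, ω i * y i) = ∑ i, ω i * (x i - y i) by
      rw [← Finset.sum_sub_distrib]; exact Finset.sum_congr rfl fun i _ => (mul_sub _ _ _).symm]
    simp
  simp_rw [inner]
  rw [gauss_cos d (σ ^ 2) (fun i => x i - y i)]
  push_cast
  ring_nf
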